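/- In ℝ², let K := {(x₁,x₂) ∈ ℝ² : x₁² + x₂² ≤ 1 and x₂ ≤ 5|x₁|} and Ω := B₂ ∖ K (B₂ the open ball of radius 2 centered at the origin). Let s ∈ (0,1) be such that Per_s(K,ℝ²) > Per_s(B₁,ℝ²). Then every measurable set E ⊂ ℝ² that minimizes Per_s(·,Ω) among all measurable F ⊂ ℝ² with F ∖ Ω = K (up to null sets) satisfies 0 < |E ∩ Ω| < |Ω|, where |·| denotes two-dimensional Lebesgue measure. -/

import Mathlib

open MeasureTheory Filter
open scoped ENNReal NNReal

noncomputable section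

/-- The fractional kernel `|x - y| ^ (-n - s)`. -/
def fracKernel (n : ℕ) (s : ℝ) (x y : EuclideanSpace ℝ (Fin n)) : ℝ :=
  dist x y ^ (-(n : ℝ) - s)

/-- The cross-shaped domain `Q(Ω) = (ℝⁿ × ℝⁿ) \ (𝒞Ω × 𝒞Ω)`. -/
def crossQ (n : ℕ) (Ω : Set (EuclideanSpace ℝ (Fin n))) :
    Set (EuclideanSpace ℝ (Fin n) × EuclideanSpace ℝ (Fin n)) :=
  (Ωᶜ ×ˢ Ωᶜ)ᶜ

/-- The fractional `s`-perimeter `Per_s(E, Ω)` of `E` in `Ω`. -/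
def fracPer (n : ℕ) (s : ℝ) (E Ω : Set (EuclideanSpace ℝ (Fin n))) : ℝ≥0∞ :=
  (1 / 2) * ∫⁻ p in crossQ n Ω,
    ENNReal.ofReal
      (|Set.indicator E (fun _ => (1 : ℝ)) p.1 - Set.indicator E (fun _ => (1 : ℝ)) p.2| *
        fracKernel n s p.1 p.2)

/-- The set `K = {x₁² + x₂² ≤ 1 and x₂ ≤ 5|x₁|} ⊆ ℝ²`. -/
def Kset : Set (EuclideanSpace ℝ (Fin 2)) :=
  {x | x 0 ^ 2 + x 1 ^ 2 ≤ 1 ∧ x 1 ≤ 5 * |x 0|}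

/-- The open unit ball `B₁ ⊆ ℝ²` centered at the origin. -/
def Bone : Set (EuclideanSpace ℝ (Fin 2)) := Metric.ball 0 1

/-- The open ball `B₂ ⊆ ℝ²` of radius `2` centered at the origin. -/
def Btwo : Set (EuclideanSpace ℝ (Fin 2)) := Metric.ball 0 2

/-- The open set `Ω = B₂ \ K`. -/
def Ωex : Set (EuclideanSpace ℝ (Fin 2)) := Btwo \ Kset

/-! ### Auxiliary material -/

open scoped symmDiff
open Set Metric

namespace SPerAux

abbrev X := EuclideanSpace ℝ (Fin 2)

/-- The integrand of the fractional perimeter. -/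
def ig (s : ℝ) (E : Set X) (p : X × X) : ℝ≥0∞ :=
  ENNReal.ofReal
    (|Set.indicator E (fun _ => (1 : ℝ)) p.1 - Set.indicator E (fun _ => (1 : ℝ)) p.2| *
      fracKernel 2 s p.1 p.2)

lemma fracPer_eq (s : ℝ) (E Ω : Set X) :
    fracPer 2 s E Ω = (1 / 2) * ∫⁻ p in crossQ 2 Ω, ig s E p := rfl

lemma crossQ_univ : crossQ 2 (Set.univ : Set X) = Set.univ := by
  simp [crossQ]

lemma ind_congr {E E' : Set X} {x y : X} (h : x ∈ E ↔ y ∈ E') :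
    Set.indicator E (fun _ => (1:ℝ)) x = Set.indicator E' (fun _ => (1:ℝ)) y := by
  by_cases hx : x ∈ E
  · rw [Set.indicator_of_mem hx, Set.indicator_of_mem (h.1 hx)]
  · rw [Set.indicator_of_notMem hx, Set.indicator_of_notMem (fun hx' => hx (h.2 hx'))]

lemma volume_prod_eq : (volume : Measure (X × X)) = (volume : Measure X).prod volume := rfl

lemma ig_ae_eq {s : ℝ} {E E' : Set X} (h : volume (E ∆ E') = 0) :
    (fun p : X × X => ig s E p) =ᵐ[volume] fun p => ig s E' p := by
  have h1 : volume {p : X × X | p.1 ∈ E ∆ E'} = 0 := by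
    have he : {p : X × X | p.1 ∈ E ∆ E'} = (E ∆ E') ×ˢ (Set.univ : Set X) := by
      ext p; simp [Set.mem_prod]
    rw [he, volume_prod_eq, Measure.prod_prod, h, zero_mul]
  have h2 : volume {p : X × X | p.2 ∈ E ∆ E'} = 0 := by
    have he : {p : X × X | p.2 ∈ E ∆ E'} = (Set.univ : Set X) ×ˢ (E ∆ E') := by
      ext p; simp [Set.mem_prod]
    rw [he, volume_prod_eq, Measure.prod_prod, h, mul_zero]
  have h3 := measure_union_null h1 h2
  filter_upwards [measure_eq_zero_iff_ae_notMem.mp h3] with p hp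
  simp only [Set.mem_union, Set.mem_setOf_eq] at hp
  push_neg at hp
  have e1 : p.1 ∈ E ↔ p.1 ∈ E' := by
    have := hp.1; rw [Set.mem_symmDiff] at this; tauto
  have e2 : p.2 ∈ E ↔ p.2 ∈ E' := by
    have := hp.2; rw [Set.mem_symmDiff] at this; tauto
  unfold ig
  rw [ind_congr e1, ind_congr e2]

lemma fracPer_congr {s : ℝ} {E E' : Set X} (h : volume (E ∆ E') = 0) (Ω : Set X) :
    fracPer 2 s E Ω = fracPer 2 s E' Ω := by
  rw [fracPer_eq, fracPer_eq]
  congr 1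
  exact lintegral_congr_ae (ae_restrict_of_ae (ig_ae_eq h))

lemma measKset : MeasurableSet Kset := by
  have h0 : Measurable (fun x : X => x 0) := (EuclideanSpace.proj (0:Fin 2)).continuous.measurable
  have h1 : Measurable (fun x : X => x 1) := (EuclideanSpace.proj (1:Fin 2)).continuous.measurable
  exact (measurableSet_le ((h0.pow_const 2).add (h1.pow_const 2)) measurable_const).inter
    (measurableSet_le h1 (h0.abs.const_mul 5))

lemma measΩ : MeasurableSet Ωex := measurableSet_ball.diff measKset

/-- The tail contribution from `Ωᶜ × Ωᶜ`. -/
def tail (s : ℝ) (F : Set X) : ℝ≥0∞ :=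
  ∫⁻ p in (Ωexᶜ ×ˢ Ωexᶜ : Set (X × X)), ig s F p

lemma split (s : ℝ) (F : Set X) :
    fracPer 2 s F Set.univ = fracPer 2 s F Ωex + (1 / 2) * tail s F := by
  unfold tail
  have hA : MeasurableSet (crossQ 2 Ωex) := (measΩ.compl.prod measΩ.compl).compl
  rw [fracPer_eq, fracPer_eq, crossQ_univ, Measure.restrict_univ,
    ← lintegral_add_compl (ig s F) hA,
    (show (crossQ 2 Ωex)ᶜ = (Ωexᶜ ×ˢ Ωexᶜ : Set (X × X)) from compl_compl _), mul_add]

lemma tail_congr {s : ℝ} {F G : Set X} (h : ∀ x, x ∉ Ωex → (x ∈ F ↔ x ∈ G)) :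
    tail s F = tail s G := by
  refine setLIntegral_congr_fun (measΩ.compl.prod measΩ.compl) ?_
  intro p hp
  obtain ⟨hx, hy⟩ := hp
  unfold ig
  rw [ind_congr (h p.1 hx), ind_congr (h p.2 hy)]

lemma Kset_subset_cball : Kset ⊆ closedBall (0:X) 1 := by
  intro x hx
  obtain ⟨h1, _⟩ := hx
  rw [mem_closedBall_zero_iff]
  have hn := EuclideanSpace.norm_eq x
  rw [Fin.sum_univ_two] at hn
  rw [hn, show (1:ℝ) = Real.sqrt 1 by simp]
  apply Real.sqrt_le_sqrt
  simpa [sq_abs] using h1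

lemma cball_subset_Btwo : closedBall (0:X) 1 ⊆ Btwo :=
  closedBall_subset_ball (by norm_num)

lemma Kset_subset_Btwo : Kset ⊆ Btwo := Kset_subset_cball.trans cball_subset_Btwo

lemma not_mem_Ωex {x : X} (hx : x ∉ Ωex) : x ∉ Btwo ∨ x ∈ Kset := by
  by_cases hB : x ∈ Btwo
  · right; by_contra hK; exact hx ⟨hB, hK⟩
  · left; exact hB

lemma iff_cb : ∀ x : X, x ∉ Ωex → (x ∈ closedBall (0:X) 1 ↔ x ∈ Kset) := by
  intro x hx
  rcases not_mem_Ωex hx with hB | hK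
  · exact ⟨fun h => absurd (cball_subset_Btwo h) hB,
      fun h => absurd (Kset_subset_Btwo h) hB⟩
  · exact ⟨fun _ => hK, fun h => Kset_subset_cball h⟩

lemma iff_b2 : ∀ x : X, x ∉ Ωex → (x ∈ Btwo ↔ x ∈ Kset) := by
  intro x hx
  rcases not_mem_Ωex hx with hB | hK
  · exact ⟨fun h => absurd h hB, fun h => absurd (Kset_subset_Btwo h) hB⟩
  · exact ⟨fun _ => hK, fun h => Kset_subset_Btwo h⟩

lemma cb_diff : closedBall (0:X) 1 \ Ωex = Kset := by
  ext x
  constructor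
  · rintro ⟨h1, h2⟩
    rcases not_mem_Ωex h2 with hB | hK
    · exact absurd (cball_subset_Btwo h1) hB
    · exact hK
  · intro hx
    exact ⟨Kset_subset_cball hx, fun hΩ => hΩ.2 hx⟩

lemma fracPer_Bone_pos {s : ℝ} (hs : s ∈ Set.Ioo (0:ℝ) 1) :
    0 < fracPer 2 s Bone Set.univ := by
  set κ : ℝ := (5:ℝ) ^ (-(2:ℝ) - s) with hκ
  have hκpos : 0 < κ := Real.rpow_pos_of_pos (by norm_num) _
  set c : X := EuclideanSpace.single (0 : Fin 2) (3:ℝ) with hc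
  have hnc : ‖c‖ = 3 := by rw [hc, EuclideanSpace.norm_single]; norm_num
  set A := ball c 1 with hA
  have key : ∀ p ∈ (Bone ×ˢ A : Set (X × X)), ENNReal.ofReal κ ≤ ig s Bone p := by
    rintro ⟨x, y⟩ ⟨hx, hy⟩
    have hx1 : ‖x‖ < 1 := mem_ball_zero_iff.mp hx
    have hyc : dist y c < 1 := mem_ball.mp hy
    have hy2 : 2 < ‖y‖ := by
      have h2 : ‖c‖ - ‖y‖ ≤ dist y c := by
        rw [dist_comm, dist_eq_norm]; exact norm_sub_norm_le c y
      linarith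
    have hyB : y ∉ Bone := by
      intro hyB
      exact absurd (mem_ball_zero_iff.mp hyB) (by linarith)
    have hd5 : dist x y ≤ 5 := by
      have ht : dist x y ≤ dist x c + dist c y := dist_triangle _ _ _
      have hxc : dist x c ≤ ‖x‖ + ‖c‖ := by
        calc dist x c ≤ dist x 0 + dist 0 c := dist_triangle _ _ _
          _ = ‖x‖ + ‖c‖ := by rw [dist_zero_right, dist_zero_left]
      rw [dist_comm c y] at ht
      linarith
    have hd0 : 0 < dist x y := by
      have : ‖y‖ - ‖x‖ ≤ dist x y := by
        rw [dist_comm, dist_eq_norm]; exact norm_sub_norm_le y x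
      linarith
    unfold ig
    rw [Set.indicator_of_mem hx, Set.indicator_of_notMem hyB]
    apply ENNReal.ofReal_le_ofReal
    have hker : κ ≤ fracKernel 2 s x y := by
      unfold fracKernel
      have hcast : (-((2:ℕ):ℝ) - s) = (-(2:ℝ) - s) := by push_cast; ring
      rw [hcast]
      exact Real.rpow_le_rpow_of_nonpos hd0 hd5 (by linarith [hs.1])
    simpa using hker
  have hineq : ENNReal.ofReal κ * volume (Bone ×ˢ A : Set (X × X))
      ≤ ∫⁻ p in (Bone ×ˢ A : Set (X × X)), ig s Bone p := by
    rw [← setLIntegral_const]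
    exact setLIntegral_mono' (measurableSet_ball.prod measurableSet_ball) key
  have hvol : (0:ℝ≥0∞) < volume (Bone ×ˢ A : Set (X × X)) := by
    rw [volume_prod_eq, Measure.prod_prod]
    have hb : (0:ℝ≥0∞) < volume (Bone : Set X) := measure_ball_pos _ _ one_pos
    have ha : (0:ℝ≥0∞) < volume (A : Set X) := measure_ball_pos _ _ one_pos
    exact ENNReal.mul_pos hb.ne' ha.ne'
  have hI : 0 < ∫⁻ p : X × X, ig s Bone p := by
    refine lt_of_lt_of_le ?_ (hineq.trans (setLIntegral_le_lintegral _ _))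
    exact ENNReal.mul_pos (ENNReal.ofReal_pos.mpr hκpos).ne' hvol.ne'
  rw [fracPer_eq, crossQ_univ, Measure.restrict_univ]
  exact ENNReal.mul_pos (by norm_num) hI.ne'

lemma finrank_prod : Module.finrank ℝ (X × X) = 4 := by
  simp [Module.finrank_prod, finrank_euclideanSpace_fin]

lemma lintegral_comp_two_smul (f : X × X → ℝ≥0∞) :
    ∫⁻ p : (X × X), f ((2:ℝ) • p) =
      ENNReal.ofReal |(((2:ℝ) ^ Module.finrank ℝ (X × X)))⁻¹| * ∫⁻ p, f p := by
  haveI : Measure.IsAddHaarMeasure (volume : Measure (X × X)) :=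
    Measure.prod.instIsAddHaarMeasure _ _
  have h2 : (2:ℝ) ≠ 0 := two_ne_zero
  let u : ℝˣ := Units.mk0 2 h2
  let e : (X × X) ≃ᵐ (X × X) := (Homeomorph.smul u).toMeasurableEquiv
  have he : ∀ p : X × X, e p = (2:ℝ) • p := fun p => rfl
  calc ∫⁻ p : (X × X), f ((2:ℝ) • p) = ∫⁻ p, f (e p) := by simp [he]
    _ = ∫⁻ p, f p ∂(Measure.map e volume) := (lintegral_map_equiv f e).symm
    _ = _ := by
        have h : Measure.map (⇑e) volume
            = Measure.map (fun p : X × X => (2:ℝ) • p) volume := rfl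
        rw [h, Measure.map_addHaar_smul volume h2, lintegral_smul_measure, smul_eq_mul]

lemma ig_two_smul {s : ℝ} (p : X × X) :
    ig s Btwo ((2:ℝ) • p) = ENNReal.ofReal ((2:ℝ) ^ (-(2:ℝ) - s)) * ig s Bone p := by
  obtain ⟨x, y⟩ := p
  have hmem : ∀ z : X, (((2:ℝ) • z ∈ Btwo) ↔ z ∈ Bone) := by
    intro z
    simp only [Btwo, Bone, mem_ball_zero_iff, norm_smul, Real.norm_two]
    constructor <;> intro h <;> linarith
  have hdist : dist ((2:ℝ) • x) ((2:ℝ) • y) = 2 * dist x y := by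
    rw [dist_smul₀, Real.norm_two]
  unfold ig fracKernel
  simp only [Prod.smul_fst, Prod.smul_snd]
  rw [ind_congr (hmem x), ind_congr (hmem y), hdist]
  have hcast : (-((2:ℕ):ℝ) - s) = (-(2:ℝ) - s) := by push_cast; ring
  rw [hcast, Real.mul_rpow (by norm_num) dist_nonneg,
    ← ENNReal.ofReal_mul (le_of_lt (Real.rpow_pos_of_pos two_pos _))]
  congr 1
  ring

lemma fracPer_Btwo_eq (s : ℝ) :
    fracPer 2 s Btwo Set.univ
      = (2:ℝ≥0∞) ^ ((2:ℝ) - s) * fracPer 2 s Bone Set.univ := by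
  have habs : |(((2:ℝ) ^ Module.finrank ℝ (X × X)))⁻¹| = (2:ℝ) ^ (-(4:ℝ)) := by
    rw [finrank_prod, abs_of_pos (by positivity), ← Real.rpow_natCast 2 4,
      ← Real.rpow_neg (by norm_num)]
    norm_num
  have hmap := lintegral_comp_two_smul (ig s Btwo)
  rw [habs] at hmap
  have hpt : ∫⁻ p : (X × X), ig s Btwo ((2:ℝ) • p)
      = ENNReal.ofReal ((2:ℝ) ^ (-(2:ℝ) - s)) * ∫⁻ p, ig s Bone p := by
    simp_rw [ig_two_smul]
    exact lintegral_const_mul' _ _ ENNReal.ofReal_ne_top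
  have hkey : (2:ℝ≥0∞) ^ (-(4:ℝ)) * ∫⁻ p : (X × X), ig s Btwo p
      = (2:ℝ≥0∞) ^ (-(2:ℝ) - s) * ∫⁻ p : (X × X), ig s Bone p := by
    have e1 : ENNReal.ofReal ((2:ℝ) ^ (-(4:ℝ))) = (2:ℝ≥0∞) ^ (-(4:ℝ)) := by
      rw [← ENNReal.ofReal_rpow_of_pos two_pos, ENNReal.ofReal_ofNat]
    have e2 : ENNReal.ofReal ((2:ℝ) ^ (-(2:ℝ) - s)) = (2:ℝ≥0∞) ^ (-(2:ℝ) - s) := by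
      rw [← ENNReal.ofReal_rpow_of_pos two_pos, ENNReal.ofReal_ofNat]
    rw [← e1, ← e2, ← hmap, hpt]
  have hI2 : ∫⁻ p : (X × X), ig s Btwo p
      = (2:ℝ≥0∞) ^ ((2:ℝ) - s) * ∫⁻ p : (X × X), ig s Bone p := by
    have h2ne : (2:ℝ≥0∞) ≠ 0 := by norm_num
    have h2nt : (2:ℝ≥0∞) ≠ ⊤ := by norm_num
    calc ∫⁻ p : (X × X), ig s Btwo p
        = ((2:ℝ≥0∞) ^ ((4:ℝ)) * (2:ℝ≥0∞) ^ (-(4:ℝ))) * ∫⁻ p : (X × X), ig s Btwo p := by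
          rw [← ENNReal.rpow_add _ _ h2ne h2nt, show (4:ℝ) + -4 = 0 by ring,
            ENNReal.rpow_zero, one_mul]
      _ = (2:ℝ≥0∞) ^ ((4:ℝ)) * ((2:ℝ≥0∞) ^ (-(4:ℝ)) * ∫⁻ p : (X × X), ig s Btwo p) := by
          rw [mul_assoc]
      _ = (2:ℝ≥0∞) ^ ((4:ℝ)) * ((2:ℝ≥0∞) ^ (-(2:ℝ) - s) * ∫⁻ p : (X × X), ig s Bone p) := by
          rw [hkey]
      _ = ((2:ℝ≥0∞) ^ ((4:ℝ)) * (2:ℝ≥0∞) ^ (-(2:ℝ) - s)) * ∫⁻ p : (X × X), ig s Bone p := by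
          rw [mul_assoc]
      _ = (2:ℝ≥0∞) ^ ((2:ℝ) - s) * ∫⁻ p : (X × X), ig s Bone p := by
          rw [← ENNReal.rpow_add _ _ h2ne h2nt, show (4:ℝ) + (-2 - s) = 2 - s by ring]
  rw [fracPer_eq, fracPer_eq, crossQ_univ, Measure.restrict_univ, hI2]
  ring

lemma cball_ae_Bone : volume ((closedBall (0:X) 1) ∆ Bone) = 0 := by
  have hsub : (closedBall (0:X) 1) ∆ Bone ⊆ sphere (0:X) 1 := by
    intro x hx
    rw [Set.mem_symmDiff] at hx
    rcases hx with ⟨h1, h2⟩ | ⟨h1, h2⟩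
    · rw [mem_closedBall_zero_iff] at h1
      simp only [Bone, mem_ball_zero_iff, not_lt] at h2
      exact mem_sphere_zero_iff_norm.mpr (le_antisymm h1 h2)
    · exact absurd (ball_subset_closedBall h1) h2
  exact measure_mono_null hsub (Measure.addHaar_sphere volume 0 1)

end SPerAux

open SPerAux

theorem sPerimeter_minimizer_nontrivial (s : ℝ) (hs : s ∈ Set.Ioo (0 : ℝ) 1)
    (hper : fracPer 2 s Bone Set.univ < fracPer 2 s Kset Set.univ)
    (E : Set (EuclideanSpace ℝ (Fin 2))) (hEm : MeasurableSet E)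
    (hEdat : volume (symmDiff (E \ Ωex) Kset) = 0)
    (hmin : ∀ F : Set (EuclideanSpace ℝ (Fin 2)), MeasurableSet F →
      volume (symmDiff (F \ Ωex) Kset) = 0 → fracPer 2 s E Ωex ≤ fracPer 2 s F Ωex) :
    0 < volume (E ∩ Ωex) ∧ volume (E ∩ Ωex) < volume Ωex := by
  have hcbadm : volume (symmDiff (closedBall (0:X) 1 \ Ωex) Kset) = 0 := by
    rw [cb_diff, symmDiff_self]
    simp
  have hminB : fracPer 2 s E Ωex ≤ fracPer 2 s (closedBall (0:X) 1) Ωex :=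
    hmin _ measurableSet_closedBall hcbadm
  have hcbBone : fracPer 2 s (closedBall (0:X) 1) Set.univ = fracPer 2 s Bone Set.univ :=
    fracPer_congr cball_ae_Bone _
  constructor
  · rw [pos_iff_ne_zero]
    intro h0
    have hsub1 : E ∆ Kset ⊆ (E ∩ Ωex) ∪ ((E \ Ωex) ∆ Kset) := by
      intro x hx
      rw [Set.mem_symmDiff] at hx
      rcases hx with ⟨hxE, hxK⟩ | ⟨hxK, hxE⟩
      · by_cases hΩ : x ∈ Ωex
        · exact Or.inl ⟨hxE, hΩ⟩
        · exact Or.inr (Set.mem_symmDiff.mpr (Or.inl ⟨⟨hxE, hΩ⟩, hxK⟩))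
      · exact Or.inr (Set.mem_symmDiff.mpr (Or.inr ⟨hxK, fun h => hxE h.1⟩))
    have hEK : volume (E ∆ Kset) = 0 :=
      measure_mono_null hsub1 (measure_union_null h0 hEdat)
    have hKE : volume (Kset ∆ E) = 0 := by rwa [symmDiff_comm]
    have h1 : fracPer 2 s Kset Set.univ ≤ fracPer 2 s Bone Set.univ := by
      calc fracPer 2 s Kset Set.univ
          = fracPer 2 s Kset Ωex + (1/2) * tail s Kset := split s Kset
        _ = fracPer 2 s E Ωex + (1/2) * tail s Kset := by
            rw [fracPer_congr hKE Ωex]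
        _ ≤ fracPer 2 s (closedBall (0:X) 1) Ωex + (1/2) * tail s Kset :=
            add_le_add_left hminB _
        _ = fracPer 2 s (closedBall (0:X) 1) Ωex
              + (1/2) * tail s (closedBall (0:X) 1) := by
            rw [tail_congr (fun x hx => (iff_cb x hx).symm)]
        _ = fracPer 2 s (closedBall (0:X) 1) Set.univ := (split s _).symm
        _ = fracPer 2 s Bone Set.univ := hcbBone
    exact absurd hper (not_lt.2 h1)
  · refine lt_of_le_of_ne (measure_mono Set.inter_subset_right) ?_
    intro hfull
    have hEΩne : volume (E ∩ Ωex) ≠ ⊤ := by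
      rw [hfull]
      have : volume Ωex ≤ volume Btwo := measure_mono Set.diff_subset
      exact (lt_of_le_of_lt this measure_ball_lt_top).ne
    have hΩE : volume (Ωex \ E) = 0 := by
      have hdiff : Ωex \ (E ∩ Ωex) = Ωex \ E := by
        ext x; simp only [Set.mem_diff, Set.mem_inter_iff]; tauto
      have h1 : volume (Ωex \ (E ∩ Ωex)) = volume Ωex - volume (E ∩ Ωex) :=
        measure_diff Set.inter_subset_right (hEm.inter measΩ).nullMeasurableSet hEΩne
      rw [hdiff] at h1
      rw [h1, hfull, tsub_self]
    have hsub2 : E ∆ Btwo ⊆ (Ωex \ E) ∪ ((E \ Ωex) ∆ Kset) := by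
      intro x hx
      rw [Set.mem_symmDiff] at hx
      rcases hx with ⟨hxE, hxB⟩ | ⟨hxB, hxE⟩
      · have hΩ : x ∉ Ωex := fun h => hxB h.1
        have hK : x ∉ Kset := fun h => hxB (Kset_subset_Btwo h)
        exact Or.inr (Set.mem_symmDiff.mpr (Or.inl ⟨⟨hxE, hΩ⟩, hK⟩))
      · by_cases hΩ : x ∈ Ωex
        · exact Or.inl ⟨hΩ, hxE⟩
        · have hK : x ∈ Kset := by
            by_contra hK
            exact hΩ ⟨hxB, hK⟩
          exact Or.inr (Set.mem_symmDiff.mpr (Or.inr ⟨hK, fun h => hxE h.1⟩))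
    have hEB : volume (E ∆ Btwo) = 0 :=
      measure_mono_null hsub2 (measure_union_null hΩE hEdat)
    have hBE : volume (Btwo ∆ E) = 0 := by rwa [symmDiff_comm]
    have h1 : fracPer 2 s Btwo Set.univ ≤ fracPer 2 s Bone Set.univ := by
      calc fracPer 2 s Btwo Set.univ
          = fracPer 2 s Btwo Ωex + (1/2) * tail s Btwo := split s Btwo
        _ = fracPer 2 s E Ωex + (1/2) * tail s Btwo := by
            rw [fracPer_congr hBE Ωex]
        _ ≤ fracPer 2 s (closedBall (0:X) 1) Ωex + (1/2) * tail s Btwo :=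
            add_le_add_left hminB _
        _ = fracPer 2 s (closedBall (0:X) 1) Ωex + (1/2) * tail s Kset := by
            rw [tail_congr iff_b2]
        _ = fracPer 2 s (closedBall (0:X) 1) Ωex
              + (1/2) * tail s (closedBall (0:X) 1) := by
            rw [tail_congr (fun x hx => (iff_cb x hx).symm)]
        _ = fracPer 2 s (closedBall (0:X) 1) Set.univ := (split s _).symm
        _ = fracPer 2 s Bone Set.univ := hcbBone
    have hP0 : 0 < fracPer 2 s Bone Set.univ := fracPer_Bone_pos hs
    have hPt : fracPer 2 s Bone Set.univ ≠ ⊤ := hper.ne_top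
    have hone_lt : (1:ℝ≥0∞) < (2:ℝ≥0∞) ^ ((2:ℝ) - s) := by
      calc (1:ℝ≥0∞) = (2:ℝ≥0∞) ^ (0:ℝ) := ENNReal.rpow_zero.symm
        _ < (2:ℝ≥0∞) ^ ((2:ℝ) - s) :=
          ENNReal.rpow_lt_rpow_of_exponent_lt (by norm_num) (by norm_num)
            (by linarith [hs.2])
    have hlt : fracPer 2 s Bone Set.univ < fracPer 2 s Btwo Set.univ := by
      rw [fracPer_Btwo_eq s]
      nth_rewrite 1 [← one_mul (fracPer 2 s Bone Set.univ)]
      exact ENNReal.mul_lt_mul_left hP0.ne' hPt hone_lt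
    exact absurd (lt_of_lt_of_le hlt h1) (lt_irrefl _)

end
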